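/- arXiv:2201.13288 — 2 statements merged into one kernel-verified Lean document; each statement's English description precedes it below -/
import Mathlib

section
/- For t ≥ 1 define f_t : ℝ → ℝ by f_t(z) = (z − 1)² + 0.1·z² + 0.1 if t is odd and f_t(z) = (z + 1)² + 0.1·z² + 0.1 if t is even, and let z_t = (−1)^{t+1}. Then for every even T ≥ 2: (i) ∑_{t=1}^T f_t(z_t) = 0.2·T; (ii) for every z ∈ ℝ, ∑_{t=1}^T f_t(z) = 1.1·(T·z² + T) ≥ 1.1·T, with the minimum 1.1·T attained at z = 0; hence the individual regret ∑_{t=1}^T f_t(z_t) − min_{z ∈ ℝ} ∑_{t=1}^T f_t(z) equals −0.9·T, which is negative. -/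
lemma sum_if_parity (A B : ℝ) : ∀ k : ℕ,
    ∑ t ∈ Finset.Icc 1 (2 * k), (if Odd t then A else B) = k * (A + B) := by
  intro k
  induction k with
  | zero => simp
  | succ n ih =>
      have h1 : 2 * (n + 1) = (2 * n + 1) + 1 := by ring
      rw [h1, Finset.sum_Icc_succ_top (by omega), Finset.sum_Icc_succ_top (by omega), ih]
      have hodd : Odd (2 * n + 1) := ⟨n, by ring⟩
      have heven : ¬ Odd (2 * n + 1 + 1) := by simp [Nat.odd_iff, Nat.even_iff] at *; omega
      rw [if_pos hodd, if_neg heven]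
      push_cast
      ring

/-- **Negative individual regret in the two-player counterexample.**  For the
induced losses `f t z = (z - 1)² + 0.1 z² + 0.1` (odd `t`) and
`f t z = (z + 1)² + 0.1 z² + 0.1` (even `t`), and the alternating plays
`z t = (-1)^(t+1)`: for every even `T ≥ 2`, the total loss of the plays is `0.2 T`;
for every fixed `z` the total loss is `1.1 (T z² + T) ≥ 1.1 T`, with minimum
`1.1 T` attained at `z = 0`; hence the individual regret equals `-0.9 T < 0`. -/
theorem individual_regret_negative_example
    (f : ℕ → ℝ → ℝ)
    (hf : ∀ t : ℕ, ∀ w : ℝ,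
      f t w = if Odd t then (w - 1) ^ 2 + 0.1 * w ^ 2 + 0.1
              else (w + 1) ^ 2 + 0.1 * w ^ 2 + 0.1)
    (z : ℕ → ℝ) (hz : ∀ t : ℕ, z t = (-1 : ℝ) ^ (t + 1))
    (T : ℕ) (hT : 2 ≤ T) (hTeven : Even T) :
    (∑ t ∈ Finset.Icc 1 T, f t (z t) = 0.2 * T) ∧
    (∀ w : ℝ, ∑ t ∈ Finset.Icc 1 T, f t w = 1.1 * ((T : ℝ) * w ^ 2 + T) ∧
      1.1 * (T : ℝ) ≤ ∑ t ∈ Finset.Icc 1 T, f t w) ∧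
    (∑ t ∈ Finset.Icc 1 T, f t (0 : ℝ) = 1.1 * T) ∧
    (∑ t ∈ Finset.Icc 1 T, f t (z t) - 1.1 * T = -0.9 * T ∧
      (-0.9 : ℝ) * T < 0) := by
  obtain ⟨k, hk⟩ := hTeven
  have hk2 : T = 2 * k := by omega
  -- each played term is 0.2
  have hplay : ∑ t ∈ Finset.Icc 1 T, f t (z t) = 0.2 * T := by
    have : ∀ t ∈ Finset.Icc 1 T, f t (z t) = 0.2 := by
      intro t _
      rw [hf, hz]
      rcases Nat.even_or_odd t with he | ho
      · have : ¬ Odd t := Nat.not_odd_iff_even.mpr he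
        rw [if_neg this]
        have : (-1 : ℝ) ^ (t + 1) = -1 := by
          rw [Odd.neg_one_pow]; exact he.add_one
        rw [this]; norm_num
      · rw [if_pos ho]
        have : (-1 : ℝ) ^ (t + 1) = 1 := by
          rw [Even.neg_one_pow]; exact ho.add_one
        rw [this]; norm_num
    rw [Finset.sum_congr rfl this, Finset.sum_const, Nat.card_Icc]
    simp
    ring
  have hsum : ∀ w : ℝ, ∑ t ∈ Finset.Icc 1 T, f t w = 1.1 * ((T : ℝ) * w ^ 2 + T) := by
    intro w
    have h1 : ∑ t ∈ Finset.Icc 1 T, f t w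
        = ∑ t ∈ Finset.Icc 1 (2 * k),
            (if Odd t then (w - 1) ^ 2 + 0.1 * w ^ 2 + 0.1
             else (w + 1) ^ 2 + 0.1 * w ^ 2 + 0.1) := by
      rw [hk2]; exact Finset.sum_congr rfl fun t _ => hf t w
    rw [h1, sum_if_parity, hk2]
    push_cast
    ring
  have hTpos : (0 : ℝ) < T := by positivity
  refine ⟨hplay, fun w => ⟨hsum w, ?_⟩, ?_, ?_, by nlinarith⟩
  · rw [hsum w]; nlinarith [sq_nonneg w]
  · rw [hsum 0]; ring
  · rw [hplay]; ring
end

section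
/- Let A be an n × n real matrix with ‖A^s‖ ≤ κ·ρ^s for all s ≥ 0 and some κ ≥ 0, 0 ≤ ρ < 1 (operator norm); let B be an n × m real matrix; let (u_t)_{t ≥ 0} in ℝᵐ satisfy ‖u_t‖ ≤ U for all t, and (w_t)_{t ≥ 0} be arbitrary in ℝⁿ. Define x_0 = 0 and x_{t+1} = A·x_t + B·u_t + w_t, and let x_t^nat = ∑_{s=0}^{t−1} A^s·w_{t−1−s}. Then for every h ≥ 0 and every t ≥ 1, ‖x_t − x_t^nat − ∑_{s=0}^{min(h,t)−1} A^s·B·u_{t−1−s}‖ ≤ κ·‖B‖·U·ρ^h / (1 − ρ). -/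
/-- **Truncated Markov-operator approximation error.**  For the linear system
`x (t+1) = A (x t) + B (u t) + w t` with `x 0 = 0`, `‖A^s‖ ≤ κ ρ^s` (`0 ≤ ρ < 1`)
and bounded controls `‖u t‖ ≤ U`, the error of approximating `x t` by Nature's x
plus the Markov operator restricted to the `h` most recent controls is at most
`κ ‖B‖ U ρ^h / (1 - ρ)`. -/
theorem markov_truncation_error {n m : ℕ}
    (A : EuclideanSpace ℝ (Fin n) →L[ℝ] EuclideanSpace ℝ (Fin n))
    (B : EuclideanSpace ℝ (Fin m) →L[ℝ] EuclideanSpace ℝ (Fin n))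
    (κ ρ : ℝ) (hκ : 0 ≤ κ) (hρ0 : 0 ≤ ρ) (hρ1 : ρ < 1)
    (hA : ∀ s : ℕ, ‖A ^ s‖ ≤ κ * ρ ^ s)
    (u : ℕ → EuclideanSpace ℝ (Fin m)) (U : ℝ) (hu : ∀ t : ℕ, ‖u t‖ ≤ U)
    (w : ℕ → EuclideanSpace ℝ (Fin n))
    (x xnat : ℕ → EuclideanSpace ℝ (Fin n))
    (hx0 : x 0 = 0) (hx : ∀ t : ℕ, x (t + 1) = A (x t) + B (u t) + w t)
    (hxnat : ∀ t : ℕ, xnat t = ∑ s ∈ Finset.range t, (A ^ s) (w (t - 1 - s))) :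
    ∀ h t : ℕ, 1 ≤ t →
      ‖x t - xnat t - ∑ s ∈ Finset.range (min h t), (A ^ s) (B (u (t - 1 - s)))‖
        ≤ κ * ‖B‖ * U * ρ ^ h / (1 - ρ) := by
  have hU : 0 ≤ U := le_trans (norm_nonneg _) (hu 0)
  have h1ρ : 0 < 1 - ρ := by linarith
  -- closed form for x t
  have key : ∀ t : ℕ, x t = ∑ s ∈ Finset.range t,
      ((A ^ s) (w (t - 1 - s)) + (A ^ s) (B (u (t - 1 - s)))) := by
    intro t
    induction t with
    | zero => simpa using hx0
    | succ t ih =>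
      rw [hx t, ih, map_sum]
      simp only [map_add]
      rw [Finset.sum_range_succ']
      simp only [pow_succ', Nat.succ_sub_one, pow_zero,
        ContinuousLinearMap.one_apply, ContinuousLinearMap.mul_apply]
      simp only [Nat.sub_zero, Nat.sub_sub, Nat.add_comm]
      abel
  intro h t ht
  have hsplit : x t - xnat t - ∑ s ∈ Finset.range (min h t), (A ^ s) (B (u (t - 1 - s)))
      = ∑ s ∈ Finset.Ico (min h t) t, (A ^ s) (B (u (t - 1 - s))) := by
    have hb : ∑ s ∈ Finset.range t, (A ^ s) (B (u (t - 1 - s)))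
        = ∑ s ∈ Finset.range (min h t), (A ^ s) (B (u (t - 1 - s)))
          + ∑ s ∈ Finset.Ico (min h t) t, (A ^ s) (B (u (t - 1 - s))) :=
      (Finset.sum_range_add_sum_Ico _ (min_le_right h t)).symm
    rw [key t, hxnat t, Finset.sum_add_distrib, hb]
    abel
  rw [hsplit]
  rcases le_or_gt h t with hht | hht
  · rw [min_eq_left hht]
    calc ‖∑ s ∈ Finset.Ico h t, (A ^ s) (B (u (t - 1 - s)))‖
        ≤ ∑ s ∈ Finset.Ico h t, ‖(A ^ s) (B (u (t - 1 - s)))‖ :=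
          norm_sum_le _ _
      _ ≤ ∑ s ∈ Finset.Ico h t, κ * ‖B‖ * U * ρ ^ s := by
          apply Finset.sum_le_sum
          intro s _
          calc ‖(A ^ s) (B (u (t - 1 - s)))‖
              ≤ ‖A ^ s‖ * ‖B (u (t - 1 - s))‖ := (A ^ s).le_opNorm _
            _ ≤ ‖A ^ s‖ * (‖B‖ * ‖u (t - 1 - s)‖) :=
                mul_le_mul_of_nonneg_left (B.le_opNorm _) (norm_nonneg _)
            _ ≤ (κ * ρ ^ s) * (‖B‖ * U) := by
                apply mul_le_mul (hA s)
                · exact mul_le_mul_of_nonneg_left (hu _) (norm_nonneg _)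
                · positivity
                · positivity
            _ = κ * ‖B‖ * U * ρ ^ s := by ring
      _ = κ * ‖B‖ * U * ∑ s ∈ Finset.Ico h t, ρ ^ s := by
          rw [Finset.mul_sum]
      _ ≤ κ * ‖B‖ * U * (ρ ^ h / (1 - ρ)) := by
          apply mul_le_mul_of_nonneg_left (geom_sum_Ico_le_of_lt_one hρ0 hρ1)
          positivity
      _ = κ * ‖B‖ * U * ρ ^ h / (1 - ρ) := by ring
  · rw [min_eq_right hht.le]
    simp only [Finset.Ico_self, Finset.sum_empty, norm_zero]
    positivity
end
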